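/- Let m ≥ 1 and M = 2^m. Every bijective labeling L : {1,…,M} → GF(2)^m admits a unique factorization L = L_R T, where T is an invertible m×m matrix over GF(2) and L_R is a bijective labeling whose matrix is a reduced column echelon matrix; i.e., there exists a unique pair (L_R, T) with L_R reduced column echelon, T invertible over GF(2), and L(q) = L_R(q)T for all q = 1,…,M. -/

import Mathlib

/-- `p` is the pivot of column `l` of the labeling matrix `L`: it is the first
(smallest row index) nonzero entry of that column. -/
def IsPivot {m : ℕ} (L : Fin (2 ^ m) → Fin m → ZMod 2) (p : Fin (2 ^ m)) (l : Fin m) : Prop :=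
  L p l ≠ 0 ∧ ∀ q, q < p → L q l = 0

/-- `L` (viewed as a `2^m × m` binary matrix) is a reduced column echelon matrix:
every column has a pivot, every row containing a pivot has all its other entries zero,
and the pivot of column `l` lies strictly below the pivot of column `l+1`. -/
def IsRCE {m : ℕ} (L : Fin (2 ^ m) → Fin m → ZMod 2) : Prop :=
  ∃ p : Fin m → Fin (2 ^ m),
    (∀ l, IsPivot L (p l) l) ∧
    (∀ l l' : Fin m, l' ≠ l → L (p l) l' = 0) ∧
    (∀ l l' : Fin m, (l' : ℕ) = (l : ℕ) + 1 → p l' < p l)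

namespace Stmt3Aux

open scoped Classical

variable {m : ℕ} (L : Fin (2 ^ m) → Fin m → ZMod 2)

/-- Least row `q` (if any) whose label lies outside `S`. -/
noncomputable def step (S : Submodule (ZMod 2) (Fin m → ZMod 2)) : Fin (2 ^ m) :=
  if h : ∃ q, L q ∉ S then wellFounded_lt.min {q | L q ∉ S} h
  else ⟨0, Nat.two_pow_pos m⟩

theorem step_spec {S : Submodule (ZMod 2) (Fin m → ZMod 2)} (h : ∃ q, L q ∉ S) :
    L (step L S) ∉ S ∧ ∀ q, q < step L S → L q ∈ S := by
  constructor
  · rw [step, dif_pos h]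
    exact wellFounded_lt.min_mem {q | L q ∉ S} h
  · intro q hq
    by_contra hq'
    rw [step, dif_pos h] at hq
    exact wellFounded_lt.not_lt_min {q | L q ∉ S} hq' hq

/-- The greedy flag of subspaces spanned by the successive pivot labels. -/
noncomputable def Wc : ℕ → Submodule (ZMod 2) (Fin m → ZMod 2)
  | 0 => ⊥
  | j + 1 => Wc j ⊔ Submodule.span (ZMod 2) {L (step L (Wc j))}

/-- The `j`-th greedy pivot label. -/
noncomputable def uj (j : ℕ) : Fin m → ZMod 2 := L (step L (Wc L j))

theorem Wc_succ (j : ℕ) :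
    Wc L (j + 1) = Wc L j ⊔ Submodule.span (ZMod 2) {uj L j} := rfl

theorem Wc_mono : Monotone (Wc L) := by
  apply monotone_nat_of_le_succ
  intro j
  rw [Wc_succ]
  exact le_sup_left

theorem uj_mem (j : ℕ) : uj L j ∈ Wc L (j + 1) := by
  rw [Wc_succ]
  exact Submodule.mem_sup_right (Submodule.mem_span_singleton_self _)

theorem Wc_eq_span (j : ℕ) : Wc L j = Submodule.span (ZMod 2) (uj L '' Set.Iio j) := by
  induction j with
  | zero =>
      have : (Set.Iio 0 : Set ℕ) = ∅ := by ext i; simp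
      rw [this]
      simp [Wc]
  | succ j ih =>
      have h1 : Set.Iio (j + 1) = insert j (Set.Iio j) := by
        ext i; simp
      rw [Wc_succ, ih, h1, Set.image_insert_eq, Submodule.span_insert, sup_comm]

theorem finrank_Wc_le (j : ℕ) : Module.finrank (ZMod 2) (Wc L j) ≤ j := by
  induction j with
  | zero => simp only [Wc]; exact (finrank_bot _ _).le
  | succ j ih =>
      rw [Wc_succ]
      have h1 : Module.finrank (ZMod 2)
          (Submodule.span (ZMod 2) {uj L j}) ≤ 1 := by
        by_cases hx : uj L j = 0
        · rw [hx, Submodule.span_zero_singleton]; simp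
        · rw [finrank_span_singleton hx]
      have h2 := Submodule.finrank_add_le_finrank_add_finrank (Wc L j)
        (Submodule.span (ZMod 2) {uj L j})
      omega

theorem step_exists (hL : Function.Surjective L) {j : ℕ} (hj : j < m) :
    ∃ q, L q ∉ Wc L j := by
  have hne : Wc L j ≠ ⊤ := by
    intro h
    have h1 := finrank_Wc_le L j
    rw [h, finrank_top, Module.finrank_pi] at h1
    simp at h1
    omega
  obtain ⟨x, hx⟩ : ∃ x, x ∉ Wc L j := by
    by_contra h
    push_neg at h
    exact hne (Submodule.eq_top_iff'.2 h)
  obtain ⟨q, rfl⟩ := hL x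
  exact ⟨q, hx⟩

theorem uj_not_mem (hL : Function.Surjective L) {j : ℕ} (hj : j < m) :
    uj L j ∉ Wc L j :=
  (step_spec L (step_exists L hL hj)).1

theorem before_mem (hL : Function.Surjective L) {j : ℕ} (hj : j < m) :
    ∀ q, q < step L (Wc L j) → L q ∈ Wc L j :=
  (step_spec L (step_exists L hL hj)).2





/-- The pivot row of column `l`. -/
noncomputable def pvt (l : Fin m) : Fin (2 ^ m) := step L (Wc L (m - 1 - (l : ℕ)))

/-- The label at the pivot row of column `l`. -/
noncomputable def ub (l : Fin m) : Fin m → ZMod 2 := uj L (m - 1 - (l : ℕ))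

theorem ub_eq (l : Fin m) : ub L l = L (pvt L l) := rfl

theorem uj_eq_ub {i : ℕ} (hi : i < m) : uj L i = ub L ⟨m - 1 - i, by omega⟩ := by
  have h2 : m - 1 - (m - 1 - i) = i := by omega
  show uj L i = uj L (m - 1 - (m - 1 - i))
  rw [h2]

theorem ub_mem {l : Fin m} {j : ℕ} (hj : m - 1 - (l : ℕ) < j) : ub L l ∈ Wc L j := by
  exact Wc_mono L hj (uj_mem L _)

theorem ub_not_mem (hL : Function.Surjective L) (l : Fin m) :
    ub L l ∉ Wc L (m - 1 - (l : ℕ)) := by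
  have : m - 1 - (l : ℕ) < m := by have := l.isLt; omega
  exact uj_not_mem L hL this

theorem zmod2_ne_zero {x : ZMod 2} (h : x ≠ 0) : x = 1 := by revert h; revert x; decide

theorem ub_li (hL : Function.Surjective L) : LinearIndependent (ZMod 2) (ub L) := by
  rw [Fintype.linearIndependent_iff]
  intro g hg
  by_contra hc
  push_neg at hc
  obtain ⟨l, hl⟩ := hc
  have hne : (Finset.univ.filter fun l => g l ≠ 0).Nonempty := ⟨l, by simp [hl]⟩
  set l₀ := (Finset.univ.filter fun l => g l ≠ 0).min' hne with hl₀
  have hl₀mem : g l₀ ≠ 0 := by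
    have := (Finset.univ.filter fun l => g l ≠ 0).min'_mem hne
    simpa using this
  have hmin : ∀ l', g l' ≠ 0 → l₀ ≤ l' := by
    intro l' hl'
    exact Finset.min'_le _ _ (by simp [hl'])
  have hsplit : g l₀ • ub L l₀ + ∑ l' ∈ Finset.univ.erase l₀, g l' • ub L l' = 0 :=
    (Finset.add_sum_erase Finset.univ (fun l' => g l' • ub L l') (Finset.mem_univ l₀)).trans hg
  have hmem : g l₀ • ub L l₀ ∈ Wc L (m - 1 - (l₀ : ℕ)) := by
    have h1 : g l₀ • ub L l₀ = - ∑ l' ∈ Finset.univ.erase l₀, g l' • ub L l' :=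
      eq_neg_of_add_eq_zero_left hsplit
    rw [h1]
    apply Submodule.neg_mem
    apply Submodule.sum_mem
    intro l' hl'
    by_cases hz : g l' = 0
    · rw [hz, zero_smul]; exact Submodule.zero_mem _
    · have hlt : l₀ < l' := lt_of_le_of_ne (hmin l' hz) (Ne.symm (Finset.ne_of_mem_erase hl'))
      apply Submodule.smul_mem
      apply ub_mem
      have h2 := l'.isLt
      have h3 : (l₀ : ℕ) < (l' : ℕ) := hlt
      omega
  rw [zmod2_ne_zero hl₀mem, one_smul] at hmem
  exact ub_not_mem L hL l₀ hmem

theorem card_finrank : Fintype.card (Fin m) = Module.finrank (ZMod 2) (Fin m → ZMod 2) := by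
  rw [Module.finrank_pi]

/-- The basis of pivot labels. -/
noncomputable def Bas (hm : 1 ≤ m) (hL : Function.Surjective L) :
    Module.Basis (Fin m) (ZMod 2) (Fin m → ZMod 2) :=
  haveI : Nonempty (Fin m) := ⟨⟨0, hm⟩⟩
  basisOfLinearIndependentOfCardEqFinrank (ub_li L hL) card_finrank

theorem Bas_apply (hm : 1 ≤ m) (hL : Function.Surjective L) (l : Fin m) :
    Bas L hm hL l = ub L l := by
  haveI : Nonempty (Fin m) := ⟨⟨0, hm⟩⟩
  rw [Bas, coe_basisOfLinearIndependentOfCardEqFinrank]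


theorem repr_zero (hm : 1 ≤ m) (hLs : Function.Surjective L) {j : ℕ} (hj : j ≤ m)
    {x : Fin m → ZMod 2} (hx : x ∈ Wc L j) {l : Fin m} (hl : j ≤ m - 1 - (l : ℕ)) :
    (Bas L hm hLs).repr x l = 0 := by
  rw [Wc_eq_span] at hx
  have hsub : uj L '' Set.Iio j ⊆ ⇑(Bas L hm hLs) '' {l' : Fin m | m - 1 - (l' : ℕ) < j} := by
    rintro _ ⟨i, hi, rfl⟩
    have him : i < m := lt_of_lt_of_le hi hj
    have hij : i < j := hi
    refine ⟨⟨m - 1 - i, by omega⟩, ?_, ?_⟩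
    · show m - 1 - (m - 1 - i) < j
      omega
    · rw [Bas_apply, ← uj_eq_ub L him]
  have hx2 : x ∈ Submodule.span (ZMod 2)
      (⇑(Bas L hm hLs) '' {l' : Fin m | m - 1 - (l' : ℕ) < j}) :=
    Submodule.span_mono hsub hx
  have hsupp := (Module.Basis.mem_span_image (Bas L hm hLs)).mp hx2
  have hlnot : l ∉ (((Bas L hm hLs).repr x).support : Set (Fin m)) := by
    intro hmem
    have := hsupp hmem
    simp only [Set.mem_setOf_eq] at this
    omega
  exact Finsupp.notMem_support_iff.mp hlnot

/-- The reduced labeling. -/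
noncomputable def LR (hm : 1 ≤ m) (hLs : Function.Surjective L) :
    Fin (2 ^ m) → Fin m → ZMod 2 :=
  fun q l => (Bas L hm hLs).repr (L q) l

/-- The transition matrix: rows are the pivot labels. -/
noncomputable def Tm : Matrix (Fin m) (Fin m) (ZMod 2) :=
  Matrix.of fun l i => ub L l i

theorem Tm_row (l : Fin m) : Tm L l = ub L l := rfl

theorem LR_pvt (hm : 1 ≤ m) (hLs : Function.Surjective L) (l l' : Fin m) :
    LR L hm hLs (pvt L l) l' = if l = l' then 1 else 0 := by
  rw [LR, ← ub_eq L l, ← Bas_apply L hm hLs, Module.Basis.repr_self, Finsupp.single_apply]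

theorem LR_before (hm : 1 ≤ m) (hLs : Function.Surjective L) (l : Fin m)
    {q : Fin (2 ^ m)} (hq : q < pvt L l) : LR L hm hLs q l = 0 := by
  have hjm : m - 1 - (l : ℕ) < m := by have := l.isLt; omega
  have hmem : L q ∈ Wc L (m - 1 - (l : ℕ)) := before_mem L hLs hjm q hq
  exact repr_zero L hm hLs (le_of_lt hjm) hmem le_rfl

theorem pvt_order (hLs : Function.Surjective L) (l l' : Fin m)
    (h : (l' : ℕ) = (l : ℕ) + 1) : pvt L l' < pvt L l := by
  have hlm := l.isLt
  have hl'm := l'.isLt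
  set j := m - 1 - (l' : ℕ) with hjdef
  have hjm : j < m := by omega
  have hj1m : j + 1 < m := by omega
  have hj1 : m - 1 - (l : ℕ) = j + 1 := by omega
  have hpl : pvt L l = step L (Wc L (j + 1)) := by rw [pvt, hj1]
  have hA : L (pvt L l) ∉ Wc L (j + 1) := by
    rw [hpl]; exact (step_spec L (step_exists L hLs hj1m)).1
  have hle : ¬ pvt L l < pvt L l' := by
    intro hlt
    have : L (pvt L l) ∈ Wc L j := before_mem L hLs hjm _ hlt
    exact hA (Wc_mono L (Nat.le_succ j) this)
  have hne : pvt L l' ≠ pvt L l := by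
    intro heq
    apply hA
    rw [← heq, ← ub_eq L l']
    exact ub_mem L (by omega)
  exact lt_of_le_of_ne (not_lt.mp hle) hne

theorem vecMul_eq_sum' (v : Fin m → ZMod 2) (M : Matrix (Fin m) (Fin m) (ZMod 2)) :
    Matrix.vecMul v M = ∑ l, v l • M l := by
  funext i
  rw [Finset.sum_apply]
  simp [Matrix.vecMul, dotProduct]

theorem LR_factor (hm : 1 ≤ m) (hLs : Function.Surjective L) (q : Fin (2 ^ m)) :
    L q = Matrix.vecMul (LR L hm hLs q) (Tm L) := by
  rw [vecMul_eq_sum']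
  simp only [Tm_row, ← Bas_apply L hm hLs]
  exact ((Bas L hm hLs).sum_repr (L q)).symm

theorem Tm_unit (hm : 1 ≤ m) (hLs : Function.Surjective L) : IsUnit (Tm L) := by
  have hT : Matrix.transpose (Tm L) = (Pi.basisFun (ZMod 2) (Fin m)).toMatrix (Bas L hm hLs) := by
    ext i l
    rw [Matrix.transpose_apply, Module.Basis.toMatrix_apply, Pi.basisFun_repr, Bas_apply]
    rfl
  haveI := (Pi.basisFun (ZMod 2) (Fin m)).invertibleToMatrix (Bas L hm hLs)
  have : IsUnit (Matrix.transpose (Tm L)) := by rw [hT]; exact isUnit_of_invertible _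
  rw [Matrix.isUnit_iff_isUnit_det, ← Matrix.det_transpose]
  exact (Matrix.isUnit_iff_isUnit_det _).mp this

theorem LR_bij (hm : 1 ≤ m) (hL : Function.Bijective L) :
    Function.Bijective (LR L hm hL.2) := by
  have heq : LR L hm hL.2 =
      ⇑Finsupp.equivFunOnFinite ∘ ⇑(Bas L hm hL.2).repr.toEquiv ∘ L := by
    funext q l; rfl
  rw [heq]
  exact (Finsupp.equivFunOnFinite.bijective.comp
    (Bas L hm hL.2).repr.toEquiv.bijective).comp hL

end Stmt3Aux

/-- Every bijective labeling `L` admits a unique factorization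
`L = L_R T` with `L_R` a bijective reduced-column-echelon labeling and `T` an invertible
`m×m` matrix over GF(2). -/
theorem stmt_3 (m : ℕ) (hm : 1 ≤ m) (L : Fin (2 ^ m) → Fin m → ZMod 2)
    (hL : Function.Bijective L) :
    ∃! P : (Fin (2 ^ m) → Fin m → ZMod 2) × Matrix (Fin m) (Fin m) (ZMod 2),
      Function.Bijective P.1 ∧ IsRCE P.1 ∧ IsUnit P.2 ∧
        ∀ q, L q = Matrix.vecMul (P.1 q) P.2 := by
  classical
  have hcancel : ∀ (M : Matrix (Fin m) (Fin m) (ZMod 2)), IsUnit M →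
      ∀ c c' : Fin m → ZMod 2, Matrix.vecMul c M = Matrix.vecMul c' M → c = c' := by
    intro M hM c c' h
    obtain ⟨U, hU⟩ := hM
    have h3 : ∀ c : Fin m → ZMod 2,
        Matrix.vecMul (Matrix.vecMul c M) ((↑U⁻¹ : Matrix (Fin m) (Fin m) (ZMod 2))) = c := by
      intro c
      rw [Matrix.vecMul_vecMul, ← hU, Units.mul_inv, Matrix.vecMul_one]
    calc c = Matrix.vecMul (Matrix.vecMul c M) ((↑U⁻¹ : Matrix (Fin m) (Fin m) (ZMod 2))) :=
          (h3 c).symm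
      _ = Matrix.vecMul (Matrix.vecMul c' M) ((↑U⁻¹ : Matrix (Fin m) (Fin m) (ZMod 2))) := by
          rw [h]
      _ = c' := h3 c'
  refine ⟨(Stmt3Aux.LR L hm hL.2, Stmt3Aux.Tm L), ⟨?_, ?_, ?_, ?_⟩, ?_⟩
  · exact Stmt3Aux.LR_bij L hm hL
  · refine ⟨Stmt3Aux.pvt L, ?_, ?_, ?_⟩
    · intro l
      constructor
      · show Stmt3Aux.LR L hm hL.2 (Stmt3Aux.pvt L l) l ≠ 0
        rw [Stmt3Aux.LR_pvt]
        simp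
      · intro q hq
        exact Stmt3Aux.LR_before L hm hL.2 l hq
    · intro l l' hne
      show Stmt3Aux.LR L hm hL.2 (Stmt3Aux.pvt L l) l' = 0
      rw [Stmt3Aux.LR_pvt, if_neg (Ne.symm hne)]
    · intro l l' h
      exact Stmt3Aux.pvt_order L hL.2 l l' h
  · exact Stmt3Aux.Tm_unit L hm hL.2
  · intro q
    exact Stmt3Aux.LR_factor L hm hL.2 q
  · rintro ⟨L', T'⟩ ⟨hbij', hrce', hunit', hfac'⟩
    dsimp only at hbij' hrce' hunit' hfac'
    obtain ⟨p', hpiv', hrow', hord'⟩ := hrce'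
    have hanti : ∀ l1 l2 : Fin m, (l1 : ℕ) < (l2 : ℕ) → p' l2 < p' l1 := by
      have key : ∀ d : ℕ, ∀ l1 l2 : Fin m, (l2 : ℕ) = (l1 : ℕ) + d + 1 → p' l2 < p' l1 := by
        intro d
        induction d with
        | zero =>
            intro l1 l2 h2
            exact hord' l1 l2 (by omega)
        | succ d ih =>
            intro l1 l2 h2
            have hl2 := l2.isLt
            have hmid : (l1 : ℕ) + d + 1 < m := by omega
            have h1 : p' l2 < p' ⟨(l1 : ℕ) + d + 1, hmid⟩ :=
              hord' ⟨(l1 : ℕ) + d + 1, hmid⟩ l2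
                (by show (l2 : ℕ) = (l1 : ℕ) + d + 1 + 1; omega)
            exact h1.trans (ih l1 ⟨(l1 : ℕ) + d + 1, hmid⟩
              (by show ((l1 : ℕ) + d + 1) = (l1 : ℕ) + d + 1; rfl))
      intro l1 l2 h
      exact key ((l2 : ℕ) - (l1 : ℕ) - 1) l1 l2 (by omega)
    have hTli : LinearIndependent (ZMod 2) (fun l => T' l) := by
      rw [Fintype.linearIndependent_iff]
      intro g hg
      have h0 : Matrix.vecMul g T' = Matrix.vecMul 0 T' := by
        rw [Stmt3Aux.vecMul_eq_sum', Matrix.zero_vecMul]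
        exact hg
      have := hcancel T' hunit' g 0 h0
      intro i
      rw [this]
      rfl
    have stepQ : ∀ l : Fin m,
        (∀ l' : Fin m, (l : ℕ) < (l' : ℕ) →
          p' l' = Stmt3Aux.pvt L l' ∧ T' l' = Stmt3Aux.ub L l') →
        p' l = Stmt3Aux.pvt L l ∧ T' l = Stmt3Aux.ub L l := by
      intro l IH
      have hlm := l.isLt
      set j := m - 1 - (l : ℕ) with hjdef
      have hjm : j < m := by omega
      have claim1 : ∀ q, q < p' l → L q ∈ Stmt3Aux.Wc L j := by
        intro q hq
        rw [hfac' q, Stmt3Aux.vecMul_eq_sum']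
        apply Submodule.sum_mem
        intro l'' _
        rcases le_or_gt (l'' : ℕ) (l : ℕ) with hc | hc
        · have hq2 : q < p' l'' := by
            rcases eq_or_lt_of_le hc with heq | hlt
            · have hll : l'' = l := Fin.ext heq
              rw [hll]
              exact hq
            · exact hq.trans (hanti l'' l hlt)
          rw [(hpiv' l'').2 q hq2, zero_smul]
          exact Submodule.zero_mem _
        · rw [(IH l'' hc).2]
          apply Submodule.smul_mem
          apply Stmt3Aux.ub_mem
          have := l''.isLt
          omega
      have claim2 : L (p' l) = T' l := by
        rw [hfac' (p' l), Stmt3Aux.vecMul_eq_sum', Finset.sum_eq_single l]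
        · rw [Stmt3Aux.zmod2_ne_zero (hpiv' l).1, one_smul]
        · intro l'' _ hne
          rw [hrow' l l'' hne, zero_smul]
        · intro h
          exact absurd (Finset.mem_univ l) h
      have claim3 : T' l ∉ Stmt3Aux.Wc L j := by
        intro hmem
        rw [Stmt3Aux.Wc_eq_span] at hmem
        have hsub : Stmt3Aux.uj L '' Set.Iio j ⊆
            (fun l'' => T' l'') '' {l'' : Fin m | (l : ℕ) < (l'' : ℕ)} := by
          rintro _ ⟨i, hi, rfl⟩
          have hij : i < j := hi
          have hgt : (l : ℕ) < ((⟨m - 1 - i, by omega⟩ : Fin m) : ℕ) := by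
            show (l : ℕ) < m - 1 - i
            omega
          refine ⟨⟨m - 1 - i, by omega⟩, hgt, ?_⟩
          exact ((IH ⟨m - 1 - i, by omega⟩ hgt).2).trans (Stmt3Aux.uj_eq_ub L (by omega)).symm
        have hmem2 := Submodule.span_mono hsub hmem
        exact hTli.notMem_span_image (by simp) hmem2
      have hex : ∃ q, L q ∉ Stmt3Aux.Wc L j := ⟨p' l, by rw [claim2]; exact claim3⟩
      have hspec := Stmt3Aux.step_spec L hex
      have hpvt : Stmt3Aux.pvt L l = Stmt3Aux.step L (Stmt3Aux.Wc L j) := by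
        rw [Stmt3Aux.pvt]
      have h1 : ¬ Stmt3Aux.pvt L l < p' l := by
        intro hlt
        rw [hpvt] at hlt
        exact hspec.1 (claim1 _ hlt)
      have h2 : ¬ p' l < Stmt3Aux.pvt L l := by
        intro hlt
        rw [hpvt] at hlt
        have := hspec.2 _ hlt
        rw [claim2] at this
        exact claim3 this
      have hpp : p' l = Stmt3Aux.pvt L l := le_antisymm (not_lt.mp h1) (not_lt.mp h2)
      refine ⟨hpp, ?_⟩
      rw [← claim2, hpp]
      exact (Stmt3Aux.ub_eq L l).symm
    have main : ∀ k : ℕ, ∀ l : Fin m, m - 1 - (l : ℕ) ≤ k →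
        p' l = Stmt3Aux.pvt L l ∧ T' l = Stmt3Aux.ub L l := by
      intro k
      induction k with
      | zero =>
          intro l hl
          apply stepQ
          intro l' hl'
          have := l'.isLt
          exact absurd hl' (by omega)
      | succ k ih =>
          intro l hl
          apply stepQ
          intro l' hl'
          apply ih
          have := l'.isLt
          omega
    have hQ : ∀ l : Fin m, p' l = Stmt3Aux.pvt L l ∧ T' l = Stmt3Aux.ub L l :=
      fun l => main (m - 1 - (l : ℕ)) l le_rfl
    have hT : T' = Stmt3Aux.Tm L := by
      funext l i
      rw [(hQ l).2]
      rfl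
    have hL' : L' = Stmt3Aux.LR L hm hL.2 := by
      funext q
      apply hcancel (Stmt3Aux.Tm L) (Stmt3Aux.Tm_unit L hm hL.2)
      rw [← Stmt3Aux.LR_factor L hm hL.2 q, ← hT]
      exact (hfac' q).symm
    rw [Prod.mk.injEq]
    exact ⟨hL', hT⟩
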